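/- arXiv:1011.1669 — 2 statements merged into one kernel-verified Lean document; each statement's English description precedes it below -/
import Mathlib

section
/- Let S₀ = (1−x²)∂_x² + (1 − (2a+3)x)∂_x and L₀ = 2(1−x)∂_x R + 2(a+1)(1−R), where R is the reflection operator. Then L₀ and S₀ commute: L₀S₀ = S₀L₀ as operators on polynomials. -/
set_option maxHeartbeats 2000000


open Polynomial

/-- The Sturm–Liouville operator `S₀ = (1-x²)∂ₓ² + (1-(2a+3)x)∂ₓ` on polynomials. -/
noncomputable def S0 (a : ℝ) (p : Polynomial ℝ) : Polynomial ℝ :=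
  (1 - X ^ 2) * derivative (derivative p) + (1 - C (2 * a + 3) * X) * derivative p

/-- The Dunkl-type operator `L₀ = 2(1-x)∂ₓ R + 2(a+1)(1-R)` on polynomials,
where `R` is the reflection `(Rf)(x) = f(-x)`. -/
noncomputable def L0 (a : ℝ) (p : Polynomial ℝ) : Polynomial ℝ :=
  (2 : ℝ) • ((1 - X) * derivative (p.comp (-X))) + (2 * (a + 1)) • (p - p.comp (-X))

/-- `L₀` and `S₀` commute: `L₀ S₀ = S₀ L₀`. -/
theorem L0_commutes_with_S0 (a : ℝ) (p : Polynomial ℝ) :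
    L0 a (S0 a p) = S0 a (L0 a p) := by
  unfold L0 S0
  simp only [derivative_add, derivative_sub, derivative_mul, derivative_comp,
    derivative_one, derivative_X, derivative_C, derivative_neg, derivative_X_pow,
    add_comp, sub_comp, mul_comp, one_comp, X_comp, C_comp, neg_comp, pow_comp,
    smul_add, smul_sub, smul_eq_C_mul, map_mul, map_add, map_ofNat, C_1,
    derivative_ofNat, ofNat_comp, derivative_zero, derivative_natCast, natCast_comp,
    neg_sq, Nat.cast_ofNat]
  ring
end

section
/- With S₀ = (1−x²)∂_x² + (1 − (2a+3)x)∂_x and L₀ = 2(1−x)∂_x R + 2(a+1)(1−R) acting on polynomials, one has the algebraic relation L₀² − 4(1+a)L₀ = −4S₀. -/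
open Polynomial

/-- The algebraic relation `L₀² - 4(1+a) L₀ = -4 S₀`. -/
theorem L0_squared_relation (a : ℝ) (p : Polynomial ℝ) :
    L0 a (L0 a p) - (4 * (1 + a)) • L0 a p = (-4 : ℝ) • S0 a p := by
  have hcc : ∀ q : Polynomial ℝ, (q.comp (-X)).comp (-X) = q := by
    intro q
    rw [comp_assoc]
    simp
  have hD : ∀ q : Polynomial ℝ, derivative (q.comp (-X)) = -((derivative q).comp (-X)) := by
    intro q
    rw [derivative_comp]
    simp [mul_comm]
  have h2 : derivative (2 : Polynomial ℝ) = 0 := derivative_ofNat 2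
  simp only [h2, L0, S0, smul_add, smul_sub, add_comp, sub_comp, mul_comp, smul_comp, one_comp,
    X_comp, hcc, hD, derivative_add, derivative_sub, derivative_mul, derivative_smul,
    derivative_one, derivative_X, derivative_neg, neg_comp, C_comp, Polynomial.smul_eq_C_mul, map_add, map_mul, map_ofNat, map_one, map_neg, derivative_C, derivative_ofNat, derivative_natCast, Nat.cast_ofNat, derivative_one, ofNat_comp, Polynomial.C_neg]
  simp only [h2, zero_mul, mul_zero, neg_zero, zero_add, add_zero, zero_sub, sub_zero]
  ring
end
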